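/- Let m ≥ 1, 0 ≤ α < 1, 0 < λ_1 ≤ … ≤ λ_m, L_F > 0, δ ≥ 0, and γ ≥ 0. On ℝ^m let |·| denote the Euclidean norm and |p|_α = (Σ_{i=1}^m λ_i^{2α} p_i²)^{1/2} the weighted α-norm, and let A : ℝ^m → ℝ^m be the diagonal linear map (Ap)_i = λ_i p_i. Let B₁, B₂ : ℝ → L(ℝ^m, ℝ^m) be continuous with |B_j(t)w| ≤ 2 L_F |w|_α (j = 1, 2) and |(B₁(t) − B₂(t))w| ≤ δ e^{−γ t} |w|_α for all t ≤ 0 and w ∈ ℝ^m. Let Θ₁, Θ₂ : ℝ → L(ℝ^m, ℝ^m) be differentiable with Θ_j(0) = Id and Θ_j'(t) = −A ∘ Θ_j(t) + B_j(t) ∘ Θ_j(t) for all t ≤ 0. Then for every t ≤ 0 and z ∈ ℝ^m, |(Θ₁(t) − Θ₂(t)) z|_α ≤ (δ λ_m^α / (γ + 2 L_F λ_m^α)) · e^{−(γ + λ_m + 4 L_F λ_m^α) t} · |z|_α. -/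

import Mathlib

open Real Set

noncomputable def diagCLM (m : ℕ) (c : Fin m → ℝ) :
    EuclideanSpace ℝ (Fin m) →L[ℝ] EuclideanSpace ℝ (Fin m) :=
  LinearMap.toContinuousLinearMap
    { toFun := fun w => WithLp.toLp 2 (fun i => c i * w i)
      map_add' := by
        intro x y; ext i
        simp [mul_add]
      map_smul' := by
        intro r x; ext i
        simp [smul_eq_mul]; ring }

lemma diagCLM_apply {m : ℕ} (c : Fin m → ℝ) (w : EuclideanSpace ℝ (Fin m)) (i : Fin m) :
    diagCLM m c w i = c i * w i := rfl

lemma norm_diagCLM {m : ℕ} (c : Fin m → ℝ) (w : EuclideanSpace ℝ (Fin m)) :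
    ‖diagCLM m c w‖ = Real.sqrt (∑ i, (c i * w i) ^ 2) := by
  simp only [EuclideanSpace.norm_eq, Real.norm_eq_abs, diagCLM_apply]
  congr 1
  exact Finset.sum_congr rfl fun i _ => sq_abs _

lemma norm_diagCLM_le {m : ℕ} (c : Fin m → ℝ) {Cb : ℝ} (hC : 0 ≤ Cb)
    (hc : ∀ i, |c i| ≤ Cb) (w : EuclideanSpace ℝ (Fin m)) :
    ‖diagCLM m c w‖ ≤ Cb * ‖w‖ := by
  rw [norm_diagCLM]
  have h1 : ∑ i, (c i * w i) ^ 2 ≤ ∑ i, Cb ^ 2 * (w i) ^ 2 := by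
    apply Finset.sum_le_sum
    intro i _
    rw [mul_pow]
    apply mul_le_mul_of_nonneg_right _ (sq_nonneg _)
    calc c i ^ 2 = |c i| ^ 2 := (sq_abs _).symm
    _ ≤ Cb ^ 2 := by apply pow_le_pow_left₀ (abs_nonneg _) (hc i)
  calc Real.sqrt (∑ i, (c i * w i) ^ 2) ≤ Real.sqrt (∑ i, Cb ^ 2 * (w i) ^ 2) :=
        Real.sqrt_le_sqrt h1
  _ = Cb * ‖w‖ := by
      rw [← Finset.mul_sum, Real.sqrt_mul (sq_nonneg _), Real.sqrt_sq hC,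
        EuclideanSpace.norm_eq]
      simp [Real.norm_eq_abs, sq_abs]

set_option maxHeartbeats 1000000 in
/-- Comparison of two linearized backward flows `Θ_j' = −A∘Θ_j + B_j(t)∘Θ_j`, `Θ_j(0) = Id`:
if `|B_j(t)w| ≤ 2 L_F |w|_α` and `|(B₁(t) − B₂(t))w| ≤ δ e^{−γt} |w|_α` for `t ≤ 0`, then
`|(Θ₁(t) − Θ₂(t)) z|_α ≤ (δ λ_m^α / (γ + 2 L_F λ_m^α)) e^{−(γ + λ_m + 4 L_F λ_m^α) t} |z|_α`
for `t ≤ 0`, where `|w|_α = (Σ λ_i^{2α} w_i²)^{1/2}`. -/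
theorem linearized_flows_backward_comparison
    (m : ℕ) (hm : 0 < m) (α : ℝ) (hα0 : 0 ≤ α) (hα1 : α < 1)
    (lam : Fin m → ℝ) (hpos : ∀ i, 0 < lam i) (hmono : Monotone lam)
    (LF δ γ : ℝ) (hLF : 0 < LF) (hδ : 0 ≤ δ) (hγ : 0 ≤ γ)
    (A : EuclideanSpace ℝ (Fin m) →L[ℝ] EuclideanSpace ℝ (Fin m))
    (hA : ∀ (p : EuclideanSpace ℝ (Fin m)) (i : Fin m), A p i = lam i * p i)
    (B₁ B₂ : ℝ → (EuclideanSpace ℝ (Fin m) →L[ℝ] EuclideanSpace ℝ (Fin m)))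
    (hB₁cont : Continuous B₁) (hB₂cont : Continuous B₂)
    (hB₁ : ∀ t ≤ (0 : ℝ), ∀ w : EuclideanSpace ℝ (Fin m),
      ‖B₁ t w‖ ≤ 2 * LF * Real.sqrt (∑ i, lam i ^ (2 * α) * (w i) ^ 2))
    (hB₂ : ∀ t ≤ (0 : ℝ), ∀ w : EuclideanSpace ℝ (Fin m),
      ‖B₂ t w‖ ≤ 2 * LF * Real.sqrt (∑ i, lam i ^ (2 * α) * (w i) ^ 2))
    (hBdiff : ∀ t ≤ (0 : ℝ), ∀ w : EuclideanSpace ℝ (Fin m),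
      ‖(B₁ t - B₂ t) w‖ ≤ δ * Real.exp (-(γ * t)) *
        Real.sqrt (∑ i, lam i ^ (2 * α) * (w i) ^ 2))
    (Θ₁ Θ₂ : ℝ → (EuclideanSpace ℝ (Fin m) →L[ℝ] EuclideanSpace ℝ (Fin m)))
    (hΘ₁0 : Θ₁ 0 = ContinuousLinearMap.id ℝ (EuclideanSpace ℝ (Fin m)))
    (hΘ₂0 : Θ₂ 0 = ContinuousLinearMap.id ℝ (EuclideanSpace ℝ (Fin m)))
    (hΘ₁ : ∀ t ≤ (0 : ℝ), HasDerivAt Θ₁ (-(A.comp (Θ₁ t)) + (B₁ t).comp (Θ₁ t)) t)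
    (hΘ₂ : ∀ t ≤ (0 : ℝ), HasDerivAt Θ₂ (-(A.comp (Θ₂ t)) + (B₂ t).comp (Θ₂ t)) t) :
    ∀ t ≤ (0 : ℝ), ∀ z : EuclideanSpace ℝ (Fin m),
      Real.sqrt (∑ i, lam i ^ (2 * α) * ((Θ₁ t - Θ₂ t) z i) ^ 2)
        ≤ (δ * lam ⟨m - 1, by omega⟩ ^ α / (γ + 2 * LF * lam ⟨m - 1, by omega⟩ ^ α)) *
          Real.exp (-((γ + lam ⟨m - 1, by omega⟩ + 4 * LF * lam ⟨m - 1, by omega⟩ ^ α) * t)) *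
          Real.sqrt (∑ i, lam i ^ (2 * α) * (z i) ^ 2) := by
  intro t ht z
  set M : Fin m := ⟨m - 1, by omega⟩ with hMdef
  have hle : ∀ i : Fin m, lam i ≤ lam M := by
    intro i
    apply hmono
    show (i : ℕ) ≤ m - 1
    have := i.isLt
    omega
  have hlamM : (0:ℝ) < lam M := hpos M
  have hlama : (0:ℝ) < lam M ^ α := Real.rpow_pos_of_pos hlamM α
  set D := diagCLM m (fun i => lam i ^ α) with hDdef
  have h2α : ∀ i : Fin m, lam i ^ (2*α) = (lam i ^ α)^2 := fun i => by
    rw [two_mul, Real.rpow_add (hpos i), sq]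
  have hkey : ∀ w : EuclideanSpace ℝ (Fin m), Real.sqrt (∑ i, lam i ^ (2 * α) * (w i) ^ 2) = ‖D w‖ := by
    intro w
    rw [hDdef, norm_diagCLM]
    congr 1
    exact Finset.sum_congr rfl fun i _ => by rw [mul_pow, h2α]
  have hDle : ∀ w : EuclideanSpace ℝ (Fin m), ‖D w‖ ≤ lam M ^ α * ‖w‖ := by
    intro w
    apply norm_diagCLM_le _ hlama.le
    intro i
    rw [abs_of_pos (Real.rpow_pos_of_pos (hpos i) α)]
    exact Real.rpow_le_rpow (hpos i).le (hle i) hα0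
  have hDA : ∀ w : EuclideanSpace ℝ (Fin m), D (A w) = diagCLM m lam (D w) := by
    intro w
    ext i
    rw [diagCLM_apply, diagCLM_apply, diagCLM_apply, hA]
    ring
  have hDA_norm : ∀ w : EuclideanSpace ℝ (Fin m), ‖D (A w)‖ ≤ lam M * ‖D w‖ := by
    intro w
    rw [hDA]
    apply norm_diagCLM_le _ hlamM.le _ (D w)
    intro i
    rw [abs_of_pos (hpos i)]
    exact hle i
  -- constants
  set μ := lam M + 2 * LF * lam M ^ α with hμdef
  set κ := γ + lam M + 4 * LF * lam M ^ α with hκdef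
  set ρ := γ + 2 * LF * lam M ^ α with hρdef
  have hρ : 0 < ρ := by positivity
  have hκμρ : κ = μ + ρ := by rw [hμdef, hκdef, hρdef]; ring
  have hγμκ : γ + μ ≤ κ := by rw [hμdef, hκdef]; nlinarith
  set C := δ * lam M ^ α / ρ with hCdef
  have hC0 : 0 ≤ C := by positivity
  have hCρ : C * ρ = δ * lam M ^ α := div_mul_cancel₀ _ hρ.ne'
  clear_value μ κ ρ C
  set T := -t with hTdef
  have hT : 0 ≤ T := by simp [hTdef]; linarith
  clear_value T
  -- pointwise flows in D-coordinates
  set g₁ : ℝ → EuclideanSpace ℝ (Fin m) := fun s => D (Θ₁ (-s) z) with hg₁def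
  set g₂ : ℝ → EuclideanSpace ℝ (Fin m) := fun s => D (Θ₂ (-s) z) with hg₂def
  set g₁' : ℝ → EuclideanSpace ℝ (Fin m) :=
    fun s => -(D ((-(A.comp (Θ₁ (-s))) + (B₁ (-s)).comp (Θ₁ (-s))) z)) with hg₁'def
  set g₂' : ℝ → EuclideanSpace ℝ (Fin m) :=
    fun s => -(D ((-(A.comp (Θ₂ (-s))) + (B₂ (-s)).comp (Θ₂ (-s))) z)) with hg₂'def
  have hder : ∀ (Θ : ℝ → (EuclideanSpace ℝ (Fin m) →L[ℝ] EuclideanSpace ℝ (Fin m)))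
      (Ξ : EuclideanSpace ℝ (Fin m) →L[ℝ] EuclideanSpace ℝ (Fin m)) (u : ℝ),
      HasDerivAt Θ Ξ u → HasDerivAt (fun s => D (Θ (-s) z)) (-(D (Ξ z))) (-u) := by
    intro Θ Ξ u hΘ
    have h1 : HasDerivAt (fun y => Θ y z) (Ξ z) u := by
      simpa using hΘ.clm_apply (hasDerivAt_const u z)
    have h2 : HasDerivAt (fun y => D (Θ y z)) (D (Ξ z)) u :=
      D.hasFDerivAt.comp_hasDerivAt u h1
    have h3 := HasDerivAt.scomp (-u) (by simpa using h2) (hasDerivAt_neg (-u))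
    have h4 : HasDerivAt ((fun y => D (Θ y z)) ∘ Neg.neg) (-(D (Ξ z))) (-u) := by simpa using h3
    exact h4
  have hg₁d : ∀ s : ℝ, 0 ≤ s → HasDerivAt g₁ (g₁' s) s := by
    intro s hs
    have := hder Θ₁ _ (-s) (hΘ₁ (-s) (by linarith))
    simpa [hg₁def, hg₁'def] using this
  have hg₂d : ∀ s : ℝ, 0 ≤ s → HasDerivAt g₂ (g₂' s) s := by
    intro s hs
    have := hder Θ₂ _ (-s) (hΘ₂ (-s) (by linarith))
    simpa [hg₂def, hg₂'def] using this
  -- unfolding the derivative expressions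
  have hexpand : ∀ (Q : EuclideanSpace ℝ (Fin m) →L[ℝ] EuclideanSpace ℝ (Fin m))
      (Bt : EuclideanSpace ℝ (Fin m) →L[ℝ] EuclideanSpace ℝ (Fin m)),
      (-(A.comp Q) + Bt.comp Q) z = -(A (Q z)) + Bt (Q z) := by
    intro Q Bt
    simp [ContinuousLinearMap.add_apply, ContinuousLinearMap.comp_apply,
      ContinuousLinearMap.neg_apply]
  -- bound on ‖D (B w)‖ via the α-norm hypotheses
  have hDB : ∀ u ≤ (0:ℝ), ∀ w : EuclideanSpace ℝ (Fin m),
      ‖D (B₂ u w)‖ ≤ 2 * LF * lam M ^ α * ‖D w‖ := by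
    intro u hu w
    calc ‖D (B₂ u w)‖ ≤ lam M ^ α * ‖B₂ u w‖ := hDle _
    _ ≤ lam M ^ α * (2 * LF * ‖D w‖) := by
        apply mul_le_mul_of_nonneg_left _ hlama.le
        rw [← hkey]
        exact hB₂ u hu w
    _ = 2 * LF * lam M ^ α * ‖D w‖ := by ring
  -- Gronwall for g₂
  have hg₂b : ∀ s ∈ Icc (0:ℝ) T, ‖g₂ s‖ ≤ ‖D z‖ * Real.exp (μ * s) := by
    have hbound : ∀ s ∈ Ico (0:ℝ) T, ‖g₂' s‖ ≤ μ * ‖g₂ s‖ + 0 := by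
      intro s hs
      have hs0 : (0:ℝ) ≤ s := hs.1
      have hsneg : -s ≤ (0:ℝ) := by linarith
      rw [hg₂'def]
      simp only [norm_neg]
      rw [hexpand, map_add, map_neg]
      calc ‖-(D (A (Θ₂ (-s) z))) + D ((B₂ (-s)) (Θ₂ (-s) z))‖
          ≤ ‖D (A (Θ₂ (-s) z))‖ + ‖D ((B₂ (-s)) (Θ₂ (-s) z))‖ := by
            rw [← norm_neg (D (A (Θ₂ (-s) z)))] at *
            exact norm_add_le _ _
      _ ≤ lam M * ‖D (Θ₂ (-s) z)‖ + 2 * LF * lam M ^ α * ‖D (Θ₂ (-s) z)‖ :=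
            add_le_add (hDA_norm _) (hDB _ hsneg _)
      _ = μ * ‖g₂ s‖ + 0 := by rw [hg₂def, hμdef]; ring
    have hcont : ContinuousOn g₂ (Icc 0 T) := by
      intro s hs
      exact ((hg₂d s hs.1).continuousAt).continuousWithinAt
    have hderiv : ∀ s ∈ Ico (0:ℝ) T, HasDerivWithinAt g₂ (g₂' s) (Ici s) s :=
      fun s hs => (hg₂d s hs.1).hasDerivWithinAt
    have hinit : ‖g₂ 0‖ ≤ ‖D z‖ := by
      rw [hg₂def]
      simp [hΘ₂0]
    intro s hs
    have := norm_le_gronwallBound_of_norm_deriv_right_le hcont hderiv hinit hbound s hs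
    rwa [gronwallBound_ε0, sub_zero] at this
  -- the difference
  set f : ℝ → EuclideanSpace ℝ (Fin m) := fun s => g₁ s - g₂ s with hfdef
  set f' : ℝ → EuclideanSpace ℝ (Fin m) := fun s => g₁' s - g₂' s with hf'def
  have hfd : ∀ s : ℝ, 0 ≤ s → HasDerivAt f (f' s) s :=
    fun s hs => (hg₁d s hs).sub (hg₂d s hs)
  have hfcont : ContinuousOn f (Icc 0 T) :=
    fun s hs => ((hfd s hs.1).continuousAt).continuousWithinAt
  have hfderiv : ∀ s ∈ Ico (0:ℝ) T, HasDerivWithinAt f (f' s) (Ici s) s :=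
    fun s hs => (hfd s hs.1).hasDerivWithinAt
  have hfb : ∀ s ∈ Ico (0:ℝ) T,
      ‖f' s‖ ≤ μ * ‖f s‖ + C * ρ * ‖D z‖ * Real.exp ((γ + μ) * s) := by
    intro s hs
    have hs0 : (0:ℝ) ≤ s := hs.1
    have hsneg : -s ≤ (0:ℝ) := by linarith
    set u₁ := Θ₁ (-s) z with hu₁def
    set u₂ := Θ₂ (-s) z with hu₂def
    have hfs : f s = D u₁ - D u₂ := rfl
    have hDv : D u₁ - D u₂ = D (u₁ - u₂) := (map_sub D u₁ u₂).symm
    have hnf' : ‖f' s‖ = ‖D ((-(A (u₁ - u₂)) + (B₁ (-s)) (u₁ - u₂)) +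
        ((B₁ (-s) - B₂ (-s)) u₂))‖ := by
      have e1 : f' s = -(D ((-(A.comp (Θ₁ (-s))) + (B₁ (-s)).comp (Θ₁ (-s))) z))
          - -(D ((-(A.comp (Θ₂ (-s))) + (B₂ (-s)).comp (Θ₂ (-s))) z)) := rfl
      rw [e1, hexpand, hexpand,
        show ∀ x y : EuclideanSpace ℝ (Fin m), -D x - -D y = -(D (x - y)) from
          fun x y => by rw [map_sub]; abel,
        norm_neg]
      congr 2
      simp only [map_sub, ContinuousLinearMap.sub_apply]
      abel
    rw [hnf']
    have htri : ‖D ((-(A (u₁ - u₂)) + (B₁ (-s)) (u₁ - u₂)) + ((B₁ (-s) - B₂ (-s)) u₂))‖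
        ≤ ‖D (A (u₁ - u₂))‖ + ‖D ((B₁ (-s)) (u₁ - u₂))‖ + ‖D ((B₁ (-s) - B₂ (-s)) u₂)‖ := by
      rw [map_add D, map_add D, map_neg D]
      calc ‖-(D (A (u₁ - u₂))) + D ((B₁ (-s)) (u₁ - u₂)) + D ((B₁ (-s) - B₂ (-s)) u₂)‖
          ≤ ‖-(D (A (u₁ - u₂))) + D ((B₁ (-s)) (u₁ - u₂))‖ + ‖D ((B₁ (-s) - B₂ (-s)) u₂)‖ :=
            norm_add_le _ _
      _ ≤ ‖-(D (A (u₁ - u₂)))‖ + ‖D ((B₁ (-s)) (u₁ - u₂))‖ + ‖D ((B₁ (-s) - B₂ (-s)) u₂)‖ :=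
            add_le_add_left (norm_add_le _ _) _
      _ = ‖D (A (u₁ - u₂))‖ + ‖D ((B₁ (-s)) (u₁ - u₂))‖ + ‖D ((B₁ (-s) - B₂ (-s)) u₂)‖ := by
            rw [norm_neg]
    have hb1 : ‖D (A (u₁ - u₂))‖ ≤ lam M * ‖f s‖ := by
      rw [hfs, hDv]; exact hDA_norm _
    have hb2 : ‖D ((B₁ (-s)) (u₁ - u₂))‖ ≤ 2 * LF * lam M ^ α * ‖f s‖ := by
      rw [hfs, hDv]
      calc ‖D ((B₁ (-s)) (u₁ - u₂))‖ ≤ lam M ^ α * ‖(B₁ (-s)) (u₁ - u₂)‖ := hDle _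
      _ ≤ lam M ^ α * (2 * LF * ‖D (u₁ - u₂)‖) := by
          apply mul_le_mul_of_nonneg_left _ hlama.le
          rw [← hkey]
          exact hB₁ _ hsneg _
      _ = 2 * LF * lam M ^ α * ‖D (u₁ - u₂)‖ := by ring
    have hb3 : ‖D ((B₁ (-s) - B₂ (-s)) u₂)‖
        ≤ C * ρ * ‖D z‖ * Real.exp ((γ + μ) * s) := by
      calc ‖D ((B₁ (-s) - B₂ (-s)) u₂)‖ ≤ lam M ^ α * ‖(B₁ (-s) - B₂ (-s)) u₂‖ := hDle _
      _ ≤ lam M ^ α * (δ * Real.exp (-(γ * (-s))) * ‖D u₂‖) := by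
          apply mul_le_mul_of_nonneg_left _ hlama.le
          rw [← hkey]
          exact hBdiff _ hsneg _
      _ = δ * lam M ^ α * Real.exp (γ * s) * ‖g₂ s‖ := by
          rw [show -(γ * -s) = γ * s from by ring]
          simp only [hg₂def]
          rw [← hu₂def]
          ring
      _ ≤ δ * lam M ^ α * Real.exp (γ * s) * (‖D z‖ * Real.exp (μ * s)) := by
          apply mul_le_mul_of_nonneg_left (hg₂b s ⟨hs.1, hs.2.le⟩) (by positivity)
      _ = C * ρ * ‖D z‖ * Real.exp ((γ + μ) * s) := by
          rw [add_mul, Real.exp_add, hCρ]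
          ring
    calc ‖D ((-(A (u₁ - u₂)) + (B₁ (-s)) (u₁ - u₂)) + ((B₁ (-s) - B₂ (-s)) u₂))‖
        ≤ ‖D (A (u₁ - u₂))‖ + ‖D ((B₁ (-s)) (u₁ - u₂))‖ + ‖D ((B₁ (-s) - B₂ (-s)) u₂)‖ := htri
    _ ≤ lam M * ‖f s‖ + 2 * LF * lam M ^ α * ‖f s‖ + C * ρ * ‖D z‖ * Real.exp ((γ + μ) * s) :=
        add_le_add (add_le_add hb1 hb2) hb3
    _ = μ * ‖f s‖ + C * ρ * ‖D z‖ * Real.exp ((γ + μ) * s) := by rw [hμdef]; ring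
  clear_value D f f' g₁ g₂ g₁' g₂'
  -- fencing with an η margin
  have hfence : ∀ η : ℝ, 0 < η → ‖f T‖ ≤ (C * ‖D z‖ + η) *
      (Real.exp (κ * T) - Real.exp (μ * T)) := by
    intro η hη
    have hCη0 : (0:ℝ) < C * ‖D z‖ + η := by positivity
    have hBd : ∀ x : ℝ, HasDerivAt
        (fun s => (C * ‖D z‖ + η) * (Real.exp (κ * s) - Real.exp (μ * s)))
        ((C * ‖D z‖ + η) * (κ * Real.exp (κ * x) - μ * Real.exp (μ * x))) x := by
      intro x
      have h1 : HasDerivAt (fun s : ℝ => Real.exp (κ * s)) (Real.exp (κ * x) * κ) x := by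
        simpa using ((hasDerivAt_id x).const_mul κ).exp
      have h2 : HasDerivAt (fun s : ℝ => Real.exp (μ * s)) (Real.exp (μ * x) * μ) x := by
        simpa using ((hasDerivAt_id x).const_mul μ).exp
      have := (h1.sub h2).const_mul (C * ‖D z‖ + η)
      exact this.congr_deriv (by ring)
    have hfinit : ‖f 0‖ ≤ (C * ‖D z‖ + η) * (Real.exp (κ * 0) - Real.exp (μ * 0)) := by
      have : f 0 = 0 := by
        simp [hfdef, hg₁def, hg₂def, hΘ₁0, hΘ₂0]
      rw [this]
      simp
    have hbound : ∀ s ∈ Ico (0:ℝ) T,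
        ‖f s‖ = (C * ‖D z‖ + η) * (Real.exp (κ * s) - Real.exp (μ * s)) →
        ‖f' s‖ < (C * ‖D z‖ + η) * (κ * Real.exp (κ * s) - μ * Real.exp (μ * s)) := by
      intro s hs heq
      have h1 := hfb s hs
      rw [heq] at h1
      have hX : Real.exp ((γ + μ) * s) ≤ Real.exp (κ * s) :=
        Real.exp_le_exp.2 (mul_le_mul_of_nonneg_right hγμκ hs.1)
      have h2 : C * ρ * ‖D z‖ * Real.exp ((γ + μ) * s)
          ≤ C * ‖D z‖ * (ρ * Real.exp (κ * s)) := by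
        calc C * ρ * ‖D z‖ * Real.exp ((γ + μ) * s)
            ≤ C * ρ * ‖D z‖ * Real.exp (κ * s) :=
              mul_le_mul_of_nonneg_left hX (by positivity)
        _ = C * ‖D z‖ * (ρ * Real.exp (κ * s)) := by ring
      have h3 : C * ‖D z‖ * (ρ * Real.exp (κ * s))
          < (C * ‖D z‖ + η) * (ρ * Real.exp (κ * s)) := by
        apply mul_lt_mul_of_pos_right _ (by positivity)
        linarith
      have h4 : (C * ‖D z‖ + η) * (κ * Real.exp (κ * s) - μ * Real.exp (μ * s))
          = μ * ((C * ‖D z‖ + η) * (Real.exp (κ * s) - Real.exp (μ * s)))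
            + (C * ‖D z‖ + η) * (ρ * Real.exp (κ * s)) := by
        rw [hκμρ]; ring
      rw [h4]
      linarith
    exact image_norm_le_of_norm_deriv_right_lt_deriv_boundary hfcont hfderiv hfinit hBd
      hbound (right_mem_Icc.2 hT)
  -- remove the η margin
  have hfT : ‖f T‖ ≤ C * ‖D z‖ * Real.exp (κ * T) := by
    apply le_of_forall_pos_le_add
    intro ε hε
    have h1 := hfence (ε / Real.exp (κ * T)) (by positivity)
    have h2 : (C * ‖D z‖ + ε / Real.exp (κ * T)) * (Real.exp (κ * T) - Real.exp (μ * T))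
        ≤ (C * ‖D z‖ + ε / Real.exp (κ * T)) * Real.exp (κ * T) := by
      apply mul_le_mul_of_nonneg_left _ (by positivity)
      have := (Real.exp_pos (μ * T)).le
      linarith
    have h3 : (C * ‖D z‖ + ε / Real.exp (κ * T)) * Real.exp (κ * T)
        = C * ‖D z‖ * Real.exp (κ * T) + ε := by
      rw [add_mul, div_mul_cancel₀ _ (Real.exp_ne_zero _)]
    linarith
  -- conclusion
  rw [hkey, hkey]
  have hgoal : D ((Θ₁ t - Θ₂ t) z) = f T := by
    rw [hfdef]
    simp only [hg₁def, hg₂def, hTdef, neg_neg, ContinuousLinearMap.sub_apply, map_sub]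
  rw [hgoal]
  calc ‖f T‖ ≤ C * ‖D z‖ * Real.exp (κ * T) := hfT
  _ = C * Real.exp (-(κ * t)) * ‖D z‖ := by
      rw [show κ * T = -(κ * t) from by rw [hTdef]; ring]
      ring
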